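/- Let X and Y be real normed (Banach) spaces, K a nonempty bounded subset of X, ℓ₀ ∈ Y, π₀ : X → Y a bounded linear operator, and F : X → Y a map such that F(K) is bounded in Y. For the operator π(x) = ℓ₀ + π₀(x) + F(x) and all natural numbers n and m, the widths satisfy d_{n+m}(π(K))_Y ≤ ‖π₀‖ · d_n(K)_X + D_m(F(K))_Y. -/

import Mathlib

/-- Deviation of a set `K` from a set `W`: `sup_{x ∈ K} inf_{ξ ∈ W} ‖x - ξ‖`. -/
noncomputable def setDeviation {X : Type*} [NormedAddCommGroup X] (K W : Set X) : ℝ :=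
  sSup ((fun x => Metric.infDist x W) '' K)

/-- The affine Kolmogorov `n`-width `d_n(K)_X`. -/
noncomputable def affKolWidth {X : Type*} [NormedAddCommGroup X] [NormedSpace ℝ X]
    (n : ℕ) (K : Set X) : ℝ :=
  sInf { r : ℝ | ∃ W : AffineSubspace ℝ X, (W : Set X).Nonempty ∧
    FiniteDimensional ℝ W.direction ∧ Module.finrank ℝ W.direction ≤ n ∧
    r = setDeviation K (W : Set X) }

/-- The Kolmogorov `n`-width `D_n(K)_X`. -/
noncomputable def linKolWidth {X : Type*} [NormedAddCommGroup X] [NormedSpace ℝ X]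
    (n : ℕ) (K : Set X) : ℝ :=
  sInf { r : ℝ | ∃ W : Submodule ℝ X,
    FiniteDimensional ℝ W ∧ Module.finrank ℝ W ≤ n ∧
    r = setDeviation K (W : Set X) }

lemma setDeviation_nonneg {X : Type*} [NormedAddCommGroup X] (K W : Set X) :
    0 ≤ setDeviation K W :=
  Real.sSup_nonneg (by rintro r ⟨x, _, rfl⟩; exact Metric.infDist_nonneg)

lemma infDist_le_setDeviation {X : Type*} [NormedAddCommGroup X] {K W : Set X}
    (hW : W.Nonempty) (hK : Bornology.IsBounded K) {x : X} (hx : x ∈ K) :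
    Metric.infDist x W ≤ setDeviation K W := by
  obtain ⟨w₀, hw₀⟩ := hW
  obtain ⟨r, hr⟩ := hK.subset_closedBall w₀
  refine le_csSup ⟨r, ?_⟩ ⟨x, hx, rfl⟩
  rintro t ⟨y, hy, rfl⟩
  exact (Metric.infDist_le_dist_of_mem hw₀).trans (by simpa using hr hy)

lemma key_infDist {X Y : Type*} [NormedAddCommGroup X] [NormedSpace ℝ X]
    [NormedAddCommGroup Y] [NormedSpace ℝ Y]
    (ℓ₀ : Y) (π₀ : X →L[ℝ] Y) (F : X → Y)
    (W : AffineSubspace ℝ X) {w₀ : X} (hw₀ : w₀ ∈ W) (V : Submodule ℝ Y) (x : X) :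
    Metric.infDist (ℓ₀ + π₀ x + F x)
      ((AffineSubspace.mk' (ℓ₀ + π₀ w₀)
        (W.direction.map (π₀ : X →ₗ[ℝ] Y) ⊔ V) : AffineSubspace ℝ Y) : Set Y)
      ≤ ‖π₀‖ * Metric.infDist x (W : Set X) + Metric.infDist (F x) (V : Set Y) := by
  refine le_of_forall_pos_le_add fun ε hε => ?_
  have hW : ((W : Set X)).Nonempty := ⟨w₀, hw₀⟩
  have hV : ((V : Set Y)).Nonempty := ⟨0, V.zero_mem⟩
  have hpos : (0:ℝ) < ‖π₀‖ + 1 := by positivity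
  set ε₁ := ε / (2 * (‖π₀‖ + 1)) with hε₁def
  have hε₁ : 0 < ε₁ := by positivity
  obtain ⟨ξ, hξ, hξd⟩ := (Metric.infDist_lt_iff hW).1 (lt_add_of_pos_right _ hε₁)
  obtain ⟨η, hη, hηd⟩ := (Metric.infDist_lt_iff hV).1 (lt_add_of_pos_right _ (half_pos hε))
  have hmem : ℓ₀ + π₀ ξ + η ∈ AffineSubspace.mk' (ℓ₀ + π₀ w₀)
      (W.direction.map (π₀ : X →ₗ[ℝ] Y) ⊔ V) := by
    rw [AffineSubspace.mem_mk']
    have h1 : (π₀ (ξ - w₀) : Y) ∈ W.direction.map (π₀ : X →ₗ[ℝ] Y) :=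
      ⟨ξ - w₀, AffineSubspace.vsub_mem_direction hξ hw₀, rfl⟩
    have heq : (ℓ₀ + π₀ ξ + η) -ᵥ (ℓ₀ + π₀ w₀) = π₀ (ξ - w₀) + η := by
      rw [vsub_eq_sub, map_sub]; abel
    rw [heq]
    exact Submodule.add_mem_sup h1 hη
  have he : ε₁ * (‖π₀‖ + 1) = ε / 2 := by
    rw [hε₁def]; field_simp
  have h2 : ‖π₀‖ * ε₁ ≤ ε / 2 := by nlinarith [hε₁.le]
  calc Metric.infDist (ℓ₀ + π₀ x + F x) _ ≤ dist (ℓ₀ + π₀ x + F x) (ℓ₀ + π₀ ξ + η) :=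
        Metric.infDist_le_dist_of_mem hmem
    _ ≤ ‖π₀‖ * dist x ξ + dist (F x) η := by
        rw [dist_eq_norm, dist_eq_norm, dist_eq_norm]
        have heq : (ℓ₀ + π₀ x + F x) - (ℓ₀ + π₀ ξ + η) = (π₀ x - π₀ ξ) + (F x - η) := by abel
        rw [heq]
        refine (norm_add_le _ _).trans (add_le_add_left ?_ _)
        rw [← map_sub]; exact π₀.le_opNorm _
    _ ≤ ‖π₀‖ * (Metric.infDist x (W : Set X) + ε₁) +
          (Metric.infDist (F x) (V : Set Y) + ε / 2) :=
        add_le_add (mul_le_mul_of_nonneg_left hξd.le (norm_nonneg _)) hηd.le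
    _ ≤ ‖π₀‖ * Metric.infDist x (W : Set X) + Metric.infDist (F x) (V : Set Y) + ε := by
        nlinarith [h2]

lemma finrank_sup_le' {K V : Type*} [DivisionRing K] [AddCommGroup V] [Module K V]
    (s t : Submodule K V) [FiniteDimensional K s] [FiniteDimensional K t] :
    Module.finrank K ↥(s ⊔ t) ≤ Module.finrank K s + Module.finrank K t := by
  have := Submodule.finrank_sup_add_finrank_inf_eq s t
  omega

/-- Theorem 2: for `π(x) = ℓ₀ + π₀(x) + F(x)` with `F(K)` bounded, one has
`d_{n+m}(π(K))_Y ≤ ‖π₀‖ d_n(K)_X + D_m(F(K))_Y`. -/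
theorem stmt_12 {X Y : Type*} [NormedAddCommGroup X] [NormedSpace ℝ X] [CompleteSpace X]
    [NormedAddCommGroup Y] [NormedSpace ℝ Y] [CompleteSpace Y]
    (n m : ℕ) (K : Set X) (hKne : K.Nonempty) (hKb : Bornology.IsBounded K)
    (ℓ₀ : Y) (π₀ : X →L[ℝ] Y) (F : X → Y)
    (hFK : Bornology.IsBounded (F '' K)) :
    affKolWidth (n + m) ((fun x => ℓ₀ + π₀ x + F x) '' K) ≤
      ‖π₀‖ * affKolWidth n K + linKolWidth m (F '' K) := by
  obtain ⟨x₀, hx₀⟩ := hKne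
  set A := { r : ℝ | ∃ W : AffineSubspace ℝ X, (W : Set X).Nonempty ∧
    FiniteDimensional ℝ W.direction ∧ Module.finrank ℝ W.direction ≤ n ∧
    r = setDeviation K (W : Set X) } with hA
  set B := { r : ℝ | ∃ W : Submodule ℝ Y,
    FiniteDimensional ℝ W ∧ Module.finrank ℝ W ≤ m ∧
    r = setDeviation (F '' K) (W : Set Y) } with hB
  set S := { r : ℝ | ∃ W : AffineSubspace ℝ Y, (W : Set Y).Nonempty ∧
    FiniteDimensional ℝ W.direction ∧ Module.finrank ℝ W.direction ≤ n + m ∧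
    r = setDeviation ((fun x => ℓ₀ + π₀ x + F x) '' K) (W : Set Y) } with hS
  have hAne : A.Nonempty := by
    refine ⟨_, AffineSubspace.mk' x₀ (⊥ : Submodule ℝ X),
      ⟨x₀, AffineSubspace.self_mem_mk' _ _⟩, ?_, ?_, rfl⟩
    · rw [AffineSubspace.direction_mk']; infer_instance
    · rw [AffineSubspace.direction_mk']; simp
  have hBne : B.Nonempty :=
    ⟨_, (⊥ : Submodule ℝ Y), inferInstance, by simp, rfl⟩
  have hSbdd : BddBelow S := by
    refine ⟨0, ?_⟩
    rintro r ⟨W, hWne, _, _, rfl⟩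
    exact setDeviation_nonneg _ _
  show sInf S ≤ ‖π₀‖ * sInf A + sInf B
  refine le_of_forall_pos_le_add fun ε hε => ?_
  have hpos : (0:ℝ) < ‖π₀‖ + 1 := by positivity
  set ε₁ := ε / (2 * (‖π₀‖ + 1)) with hε₁def
  have hε₁ : 0 < ε₁ := by positivity
  obtain ⟨r, hrA, hrlt⟩ := Real.lt_sInf_add_pos hAne hε₁
  obtain ⟨s, hsB, hslt⟩ := Real.lt_sInf_add_pos hBne (half_pos hε)
  obtain ⟨W, hWne, hWfd, hWrk, rfl⟩ := hrA
  obtain ⟨V, hVfd, hVrk, rfl⟩ := hsB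
  obtain ⟨w₀, hw₀⟩ := hWne
  haveI := hWfd
  haveI := hVfd
  set W' : AffineSubspace ℝ Y :=
    AffineSubspace.mk' (ℓ₀ + π₀ w₀) (W.direction.map (π₀ : X →ₗ[ℝ] Y) ⊔ V) with hW'
  have hmemS : setDeviation ((fun x => ℓ₀ + π₀ x + F x) '' K) (W' : Set Y) ∈ S := by
    refine ⟨W', ⟨_, AffineSubspace.self_mem_mk' _ _⟩, ?_, ?_, rfl⟩
    · rw [hW', AffineSubspace.direction_mk']; infer_instance
    · rw [hW', AffineSubspace.direction_mk']
      refine (finrank_sup_le' _ _).trans (add_le_add ?_ hVrk)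
      exact (Submodule.finrank_map_le _ _).trans hWrk
  have hdev : setDeviation ((fun x => ℓ₀ + π₀ x + F x) '' K) (W' : Set Y) ≤
      ‖π₀‖ * setDeviation K (W : Set X) + setDeviation (F '' K) (V : Set Y) := by
    refine Real.sSup_le ?_
      (add_nonneg (mul_nonneg (norm_nonneg _) (setDeviation_nonneg _ _))
        (setDeviation_nonneg _ _))
    rintro t ⟨z, ⟨x, hx, rfl⟩, rfl⟩
    refine (key_infDist ℓ₀ π₀ F W hw₀ V x).trans ?_
    refine add_le_add (mul_le_mul_of_nonneg_left ?_ (norm_nonneg _)) ?_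
    · exact infDist_le_setDeviation ⟨w₀, hw₀⟩ hKb hx
    · exact infDist_le_setDeviation ⟨0, V.zero_mem⟩ hFK ⟨x, hx, rfl⟩
  have hle := (csInf_le hSbdd hmemS).trans hdev
  have he : ε₁ * (‖π₀‖ + 1) = ε / 2 := by
    rw [hε₁def]; field_simp
  have h2 : ‖π₀‖ * ε₁ ≤ ε / 2 := by nlinarith [hε₁.le]
  have h3 : ‖π₀‖ * setDeviation K (W : Set X) ≤ ‖π₀‖ * (sInf A + ε₁) :=
    mul_le_mul_of_nonneg_left hrlt.le (norm_nonneg _)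
  nlinarith [hle, h3, hslt, h2]
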